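/- arXiv:2209.01703 — 4 statements merged into one kernel-verified Lean document; each statement's English description precedes it below -/
import Mathlib

section
/- Let G be a simple graph on M vertices with at least one edge, let L be its graph Laplacian matrix over the reals, and let α > 0. Let S := (I_M + αL)⁻¹ be the graph filter. Let K_c be a d×d real positive semidefinite matrix with positive trace and K an n×n real positive semidefinite matrix with positive trace. Then tr((K_c ⊗ I_M) ⊗ K) > tr((K_c ⊗ S²) ⊗ K), i.e., the trace of the initial covariance of the recursive GP without graph information strictly exceeds that of the recursive GP with graph information (Theorem 1). -/
open Matrix Kronecker

set_option linter.unusedSectionVars false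
set_option linter.unusedVariables false

variable {m : Type*} [Fintype m] [DecidableEq m]

lemma psd_diag_nonneg {B : Matrix m m ℝ} (hB : B.PosSemidef) (i : m) : 0 ≤ B i i := by
  have := hB.dotProduct_mulVec_nonneg (Pi.single i 1)
  simpa [dotProduct, mulVec, Pi.single_apply, Finset.sum_ite_eq] using this

lemma psd_trace_nonneg {B : Matrix m m ℝ} (hB : B.PosSemidef) : 0 ≤ B.trace :=
  Finset.sum_nonneg fun i _ => psd_diag_nonneg hB i

lemma psd_smul {B : Matrix m m ℝ} (hB : B.PosSemidef) {c : ℝ} (hc : 0 ≤ c) :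
    (c • B).PosSemidef := by
  refine Matrix.PosSemidef.of_dotProduct_mulVec_nonneg ?_ ?_
  · unfold Matrix.IsHermitian
    rw [conjTranspose_smul, hB.1]
    simp
  · intro x
    have := hB.dotProduct_mulVec_nonneg x
    simp only [smul_mulVec, dotProduct_smul]
    positivity

lemma psd_trace_pos {B : Matrix m m ℝ} (hB : B.PosSemidef) (hB0 : B ≠ 0) : 0 < B.trace := by
  rcases lt_or_eq_of_le (psd_trace_nonneg hB) with h | h
  · exact h
  · exfalso
    apply hB0
    have hdiag : ∀ i, B i i = 0 := by
      have := (Finset.sum_eq_zero_iff_of_nonneg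
        (fun i _ => psd_diag_nonneg hB i)).mp h.symm
      intro i; exact this i (Finset.mem_univ i)
    have key : ∀ i j, (Pi.single i 1 : m → ℝ) ⬝ᵥ (B *ᵥ Pi.single j (1:ℝ)) = B i j := by
      intro i j
      simp [dotProduct, mulVec, Pi.single_apply, Finset.sum_ite_eq]
    have hsymm : ∀ i j, B j i = B i j := by
      intro i j
      have := hB.1
      rw [Matrix.IsHermitian] at this
      conv_lhs => rw [← this]
      simp [conjTranspose_apply]
    ext i j
    by_cases hij : i = j
    · subst hij; simpa using hdiag i
    · set t : ℝ := -B i j with ht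
      have key' : ∀ (a b : ℝ), (Pi.single i a : m → ℝ) ⬝ᵥ (B *ᵥ Pi.single j b) = a * (B i j * b) := by
        intro a b
        simp [dotProduct, mulVec, Pi.single_apply, Finset.sum_ite_eq, mul_comm]
      have key2 : ∀ (a b : ℝ), (Pi.single j a : m → ℝ) ⬝ᵥ (B *ᵥ Pi.single i b) = a * (B j i * b) := by
        intro a b
        simp [dotProduct, mulVec, Pi.single_apply, Finset.sum_ite_eq, mul_comm]
      have keyi : ∀ (a b : ℝ), (Pi.single i a : m → ℝ) ⬝ᵥ (B *ᵥ Pi.single i b) = a * (B i i * b) := by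
        intro a b
        simp [dotProduct, mulVec, Pi.single_apply, Finset.sum_ite_eq, mul_comm]
      have keyj : ∀ (a b : ℝ), (Pi.single j a : m → ℝ) ⬝ᵥ (B *ᵥ Pi.single j b) = a * (B j j * b) := by
        intro a b
        simp [dotProduct, mulVec, Pi.single_apply, Finset.sum_ite_eq, mul_comm]
      have hx := hB.dotProduct_mulVec_nonneg ((Pi.single i 1 + Pi.single j t : m → ℝ))
      have hstar : star ((Pi.single i 1 + Pi.single j t : m → ℝ))
          = (Pi.single i 1 + Pi.single j t : m → ℝ) := by simp
      rw [hstar, mulVec_add, dotProduct_add, add_dotProduct, add_dotProduct,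
        keyi, key', key2, keyj, hdiag, hdiag, hsymm i j] at hx
      have h1 : B i j ^ 2 ≤ 0 := by rw [ht] at hx; nlinarith
      have h2 : B i j = 0 := by nlinarith [sq_nonneg (B i j)]
      simpa using h2

/-- **Theorem 1 (RGP-G vs RGP initial covariance trace).**
For a simple graph `G` on `M` vertices with at least one edge, Laplacian `L`, `α > 0`,
graph filter `S = (I + αL)⁻¹`, and PSD kernel matrices `K_c`, `K` with positive traces,
the trace of `(K_c ⊗ I_M) ⊗ K` strictly exceeds that of `(K_c ⊗ S²) ⊗ K`. -/
theorem rgp_initial_covariance_trace_gt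
    (M d n : ℕ) (G : SimpleGraph (Fin M)) [DecidableRel G.Adj]
    (hG : G.edgeSet.Nonempty) (α : ℝ) (hα : 0 < α)
    (Kc : Matrix (Fin d) (Fin d) ℝ) (hKc : Kc.PosSemidef) (hKctr : 0 < Kc.trace)
    (K : Matrix (Fin n) (Fin n) ℝ) (hK : K.PosSemidef) (hKtr : 0 < K.trace)
    (L : Matrix (Fin M) (Fin M) ℝ) (hL : L = G.lapMatrix ℝ)
    (S : Matrix (Fin M) (Fin M) ℝ) (hS : S = (1 + α • L)⁻¹) :
    ((Kc ⊗ₖ (S * S)) ⊗ₖ K).trace < ((Kc ⊗ₖ (1 : Matrix (Fin M) (Fin M) ℝ)) ⊗ₖ K).trace := by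
  have hLpsd : L.PosSemidef := hL ▸ SimpleGraph.posSemidef_lapMatrix ℝ G
  set A : Matrix (Fin M) (Fin M) ℝ := 1 + α • L with hAdef
  have hA : A.PosDef := Matrix.PosDef.add_posSemidef Matrix.PosDef.one (psd_smul hLpsd hα.le)
  have hdet : IsUnit A.det := isUnit_iff_ne_zero.mpr hA.det_pos.ne'
  have hAS : A * S = 1 := by rw [hS]; exact Matrix.mul_nonsing_inv A hdet
  have hSA : S * A = 1 := by rw [hS]; exact Matrix.nonsing_inv_mul A hdet
  have hSpd : S.PosDef := hS ▸ hA.inv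
  set D : Matrix (Fin M) (Fin M) ℝ := A * A - 1 with hD
  have hexp : D = (2*α) • L + (α*α) • (L * L) := by
    rw [hD, hAdef]
    simp only [add_mul, mul_add, one_mul, mul_one, smul_mul_assoc, mul_smul_comm, smul_smul]
    module
  have hLL : (L * L).PosSemidef := by
    have h := Matrix.posSemidef_conjTranspose_mul_self L
    rwa [hLpsd.1] at h
  have hDpsd : D.PosSemidef := by
    rw [hexp]
    exact (psd_smul hLpsd (by positivity)).add (psd_smul hLL (mul_self_nonneg α))
  have hB : 1 - S * S = Sᴴ * D * S := by
    rw [hSpd.isHermitian, hD]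
    have h2 : S * (A * A - 1) * S = (S * A) * (A * S) - S * S := by noncomm_ring
    rw [h2, hSA, hAS, one_mul]
  have hBpsd : (1 - S * S).PosSemidef := by
    rw [hB]; exact hDpsd.conjTranspose_mul_mul_same S
  -- trace of D is positive
  obtain ⟨u, v, huv⟩ : ∃ u v, G.Adj u v := by
    obtain ⟨e, he⟩ := hG
    induction e with
    | h x y => exact ⟨x, y, he⟩
  have hLuu : (0:ℝ) < L u u := by
    rw [hL]
    have hdeg : 0 < G.degree u := G.degree_pos_iff_exists_adj u |>.mpr ⟨v, huv⟩
    simp [SimpleGraph.lapMatrix, SimpleGraph.degMatrix, huv.ne]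
    exact_mod_cast hdeg
  have htrL : 0 < L.trace := by
    refine Finset.sum_pos' (fun i _ => psd_diag_nonneg hLpsd i) ⟨u, Finset.mem_univ u, hLuu⟩
  have htrD : 0 < D.trace := by
    rw [hexp, trace_add, trace_smul, trace_smul, smul_eq_mul, smul_eq_mul]
    have := psd_trace_nonneg hLL
    nlinarith
  have hBne : 1 - S * S ≠ 0 := by
    intro h0
    have hSS : S * S = 1 := (sub_eq_zero.mp h0).symm
    have hAA : A * A = 1 := by
      have h1 : A * (S * S) * A = A * A := by rw [hSS, mul_one]
      have h2 : A * (S * S) * A = (A * S) * (S * A) := by noncomm_ring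
      rw [← h1, h2, hAS, hSA, one_mul]
    have hD0 : D = 0 := by rw [hD, hAA, sub_self]
    rw [hD0, trace_zero] at htrD
    exact lt_irrefl 0 htrD
  have hlt : (S * S).trace < (1 : Matrix (Fin M) (Fin M) ℝ).trace := by
    have h := psd_trace_pos hBpsd hBne
    rw [trace_sub] at h
    linarith
  rw [trace_kronecker, trace_kronecker, trace_kronecker, trace_kronecker]
  exact mul_lt_mul_of_pos_right (mul_lt_mul_of_pos_left hlt hKctr) hKtr
end

section
/- Let L and L_p be real symmetric positive semidefinite M×M matrices and α ≥ 0. Then ‖(I_M + αL)⁻¹ − (I_M + αL_p)⁻¹‖₂ ≤ α ‖L − L_p‖₂, where ‖·‖₂ is the spectral (ℓ²-operator) norm. In particular the graph filter g(L) = (I_M + αL)⁻¹ is linearly stable to perturbations of the graph shift operator with stability constant α. -/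
open Matrix

private lemma psd_smul_s6 {M : ℕ} {L : Matrix (Fin M) (Fin M) ℝ} (hL : L.PosSemidef)
    {α : ℝ} (hα : 0 ≤ α) : (α • L).PosSemidef := by
  rw [posSemidef_iff_dotProduct_mulVec] at hL ⊢
  refine ⟨?_, fun x => ?_⟩
  · unfold Matrix.IsHermitian
    rw [conjTranspose_smul, hL.1]
    simp
  · rw [smul_mulVec, dotProduct_smul]
    exact smul_nonneg hα (hL.2 x)

private lemma inv_clm_norm_le {M : ℕ} {P : Matrix (Fin M) (Fin M) ℝ} (hP : P.PosSemidef) :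
    ‖(Matrix.toEuclideanCLM (𝕜 := ℝ) (1 + P)⁻¹ : EuclideanSpace ℝ (Fin M) →L[ℝ] EuclideanSpace ℝ (Fin M))‖ ≤ 1 := by
  set A : Matrix (Fin M) (Fin M) ℝ := 1 + P with hA
  have hApd : A.PosDef := Matrix.PosDef.add_posSemidef Matrix.PosDef.one hP
  have hAinv : A * A⁻¹ = 1 := Matrix.mul_nonsing_inv A hApd.det_pos.ne'.isUnit
  refine ContinuousLinearMap.opNorm_le_bound _ zero_le_one fun y => ?_
  set x : EuclideanSpace ℝ (Fin M) := Matrix.toEuclideanCLM (𝕜 := ℝ) A⁻¹ y with hx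
  have hAx : Matrix.toEuclideanCLM (𝕜 := ℝ) A x = y := by
    rw [hx, ← ContinuousLinearMap.comp_apply, ← ContinuousLinearMap.mul_def, ← _root_.map_mul, hAinv,
      _root_.map_one, ContinuousLinearMap.one_apply]
  -- ⟪x, A x⟫ = ‖x‖² + ⟪x, P x⟫ ≥ ‖x‖²
  have hinner : ‖x‖ ^ 2 ≤ inner ℝ x (Matrix.toEuclideanCLM (𝕜 := ℝ) A x) := by
    have hP' : (0:ℝ) ≤ inner ℝ x (Matrix.toEuclideanCLM (𝕜 := ℝ) P x) := by
      have := (posSemidef_iff_dotProduct_mulVec.mp hP).2 ((WithLp.equiv 2 (Fin M → ℝ)) x)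
      simpa [EuclideanSpace.inner_eq_star_dotProduct, Matrix.ofLp_toEuclideanCLM,
        dotProduct_comm] using this
    have : (inner ℝ x (Matrix.toEuclideanCLM (𝕜 := ℝ) A x) : ℝ)
        = (inner ℝ x x : ℝ) + (inner ℝ x (Matrix.toEuclideanCLM (𝕜 := ℝ) P x) : ℝ) := by
      rw [hA, _root_.map_add, _root_.map_one, ContinuousLinearMap.add_apply, ContinuousLinearMap.one_apply,
        inner_add_right]
    rw [this, real_inner_self_eq_norm_sq]
    linarith
  have h2 : ‖x‖ ^ 2 ≤ ‖x‖ * ‖y‖ := by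
    calc ‖x‖ ^ 2 ≤ inner ℝ x (Matrix.toEuclideanCLM (𝕜 := ℝ) A x) := hinner
      _ = inner ℝ x y := by rw [hAx]
      _ ≤ ‖x‖ * ‖y‖ := real_inner_le_norm x y
  rw [one_mul]
  rcases eq_or_lt_of_le (norm_nonneg x) with h0 | h0
  · rw [← h0]; exact norm_nonneg y
  · nlinarith

set_option synthInstance.maxHeartbeats 1000000 in
set_option maxHeartbeats 1000000 in
/-- **Linear stability of the graph filter to topology perturbations.**
For real symmetric positive semidefinite Laplacians `L`, `L_p` and `α ≥ 0`,
`‖(I + αL)⁻¹ − (I + αL_p)⁻¹‖₂ ≤ α‖L − L_p‖₂` in the spectral (ℓ²-operator) norm. -/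
theorem graphFilter_linearly_stable
    (M : ℕ) (L Lp : Matrix (Fin M) (Fin M) ℝ)
    (hL : L.PosSemidef) (hLp : Lp.PosSemidef)
    (α : ℝ) (hα : 0 ≤ α) :
    ‖Matrix.toEuclideanCLM (𝕜 := ℝ) ((1 + α • L)⁻¹ - (1 + α • Lp)⁻¹)‖
      ≤ α * ‖Matrix.toEuclideanCLM (𝕜 := ℝ) (L - Lp)‖ := by
  set A : Matrix (Fin M) (Fin M) ℝ := 1 + α • L with hA
  set B : Matrix (Fin M) (Fin M) ℝ := 1 + α • Lp with hB
  have hApsd := psd_smul_s6 hL hα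
  have hBpsd := psd_smul_s6 hLp hα
  have hApd : A.PosDef := Matrix.PosDef.add_posSemidef Matrix.PosDef.one hApsd
  have hBpd : B.PosDef := Matrix.PosDef.add_posSemidef Matrix.PosDef.one hBpsd
  have hAinv : A⁻¹ * A = 1 := Matrix.nonsing_inv_mul A hApd.det_pos.ne'.isUnit
  have hBinv : B * B⁻¹ = 1 := Matrix.mul_nonsing_inv B hBpd.det_pos.ne'.isUnit
  have key : A⁻¹ - B⁻¹ = A⁻¹ * (B - A) * B⁻¹ := by
    rw [Matrix.mul_sub, Matrix.sub_mul, Matrix.mul_assoc, hBinv, Matrix.mul_one, hAinv,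
      Matrix.one_mul]
  have hBA : B - A = -(α • (L - Lp)) := by
    rw [hA, hB, smul_sub]; abel
  rw [key, hBA]
  have : Matrix.toEuclideanCLM (𝕜 := ℝ) (A⁻¹ * -(α • (L - Lp)) * B⁻¹)
      = Matrix.toEuclideanCLM (𝕜 := ℝ) A⁻¹ * Matrix.toEuclideanCLM (𝕜 := ℝ) (-(α • (L - Lp)))
        * Matrix.toEuclideanCLM (𝕜 := ℝ) B⁻¹ := by
    rw [_root_.map_mul, _root_.map_mul]
  rw [this]
  have hmid : ‖Matrix.toEuclideanCLM (𝕜 := ℝ) (-(α • (L - Lp)))‖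
      = α * ‖Matrix.toEuclideanCLM (𝕜 := ℝ) (L - Lp)‖ := by
    rw [map_neg, norm_neg, _root_.map_smul]
    have := norm_smul (α := ℝ)
      (β := EuclideanSpace ℝ (Fin M) →L[ℝ] EuclideanSpace ℝ (Fin M)) α
      (Matrix.toEuclideanCLM (𝕜 := ℝ) (L - Lp))
    rw [this, Real.norm_eq_abs, abs_of_nonneg hα]
  calc ‖Matrix.toEuclideanCLM (𝕜 := ℝ) A⁻¹ * Matrix.toEuclideanCLM (𝕜 := ℝ) (-(α • (L - Lp)))
        * Matrix.toEuclideanCLM (𝕜 := ℝ) B⁻¹‖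
      ≤ ‖Matrix.toEuclideanCLM (𝕜 := ℝ) A⁻¹ * Matrix.toEuclideanCLM (𝕜 := ℝ) (-(α • (L - Lp)))‖
        * ‖Matrix.toEuclideanCLM (𝕜 := ℝ) B⁻¹‖ := norm_mul_le _ _
    _ ≤ ‖Matrix.toEuclideanCLM (𝕜 := ℝ) A⁻¹‖
        * ‖Matrix.toEuclideanCLM (𝕜 := ℝ) (-(α • (L - Lp)))‖
        * ‖Matrix.toEuclideanCLM (𝕜 := ℝ) B⁻¹‖ := by
        gcongr; exact norm_mul_le _ _
    _ ≤ 1 * ‖Matrix.toEuclideanCLM (𝕜 := ℝ) (-(α • (L - Lp)))‖ * 1 := by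
        gcongr
        · exact inv_clm_norm_le hApsd
        · exact inv_clm_norm_le hBpsd
    _ = α * ‖Matrix.toEuclideanCLM (𝕜 := ℝ) (L - Lp)‖ := by rw [one_mul, mul_one, hmid]
end

section
/- Let A and A_g be real positive definite n×n matrices, F and F_g real symmetric m×m matrices, and D, D_g real n×m matrices. Suppose the block matrix [[A, D],[Dᵀ, F]] minus the block matrix [[A_g, D_g],[D_gᵀ, F_g]] is positive semidefinite, and that [[A_g, D_g],[D_gᵀ, F_g]] is positive semidefinite. Then the difference of Schur complements (F − Dᵀ A⁻¹ D) − (F_g − D_gᵀ A_g⁻¹ D_g) is positive semidefinite; in particular tr(F − Dᵀ A⁻¹ D) ≥ tr(F_g − D_gᵀ A_g⁻¹ D_g). -/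
open Matrix

private lemma psd_trace_nonneg_s8 {m : ℕ} {M : Matrix (Fin m) (Fin m) ℝ}
    (h : M.PosSemidef) : 0 ≤ M.trace := by
  have hdiag : ∀ i, 0 ≤ M i i := fun i => by
    have := h.dotProduct_mulVec_nonneg (Pi.single i 1)
    simpa [dotProduct, mulVec, Pi.single_apply, Finset.sum_ite_eq, Finset.mul_sum] using this
  exact Finset.sum_nonneg fun i _ => hdiag i

/-- **Monotonicity of the Schur complement (inference-step inequality of Theorem 2).**
If `[[A, D],[Dᵀ, F]] - [[A_g, D_g],[D_gᵀ, F_g]]` is positive semidefinite, the latter block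
matrix is positive semidefinite, and `A`, `A_g` are positive definite, then
`(F - Dᵀ A⁻¹ D) - (F_g - D_gᵀ A_g⁻¹ D_g)` is positive semidefinite; in particular
`tr(F - Dᵀ A⁻¹ D) ≥ tr(F_g - D_gᵀ A_g⁻¹ D_g)`. -/
theorem schur_complement_monotone
    (n m : ℕ)
    (A Ag : Matrix (Fin n) (Fin n) ℝ) (hA : A.PosDef) (hAg : Ag.PosDef)
    (F Fg : Matrix (Fin m) (Fin m) ℝ) (hF : F.IsHermitian) (hFg : Fg.IsHermitian)
    (D Dg : Matrix (Fin n) (Fin m) ℝ)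
    (hdiff : (Matrix.fromBlocks A D Dᵀ F - Matrix.fromBlocks Ag Dg Dgᵀ Fg).PosSemidef)
    (hg : (Matrix.fromBlocks Ag Dg Dgᵀ Fg).PosSemidef) :
    ((F - Dᵀ * A⁻¹ * D) - (Fg - Dgᵀ * Ag⁻¹ * Dg)).PosSemidef ∧
      (Fg - Dgᵀ * Ag⁻¹ * Dg).trace ≤ (F - Dᵀ * A⁻¹ * D).trace := by
  haveI : Invertible A := A.invertibleOfIsUnitDet ((isUnit_iff_isUnit_det A).1 hA.isUnit)
  haveI : Invertible Ag := Ag.invertibleOfIsUnitDet ((isUnit_iff_isUnit_det Ag).1 hAg.isUnit)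
  have hDT : Dᵀ = Dᴴ := (D.conjTranspose_eq_transpose_of_trivial).symm
  have hDgT : Dgᵀ = Dgᴴ := (Dg.conjTranspose_eq_transpose_of_trivial).symm
  -- Hermitian-ness of the difference of Schur complements
  have hSherm : (F - Dᵀ * A⁻¹ * D).IsHermitian := by
    rw [hDT]; exact hF.sub (isHermitian_conjTranspose_mul_mul D hA.1.inv)
  have hSgherm : (Fg - Dgᵀ * Ag⁻¹ * Dg).IsHermitian := by
    rw [hDgT]; exact hFg.sub (isHermitian_conjTranspose_mul_mul Dg hAg.1.inv)
  have key : ((F - Dᵀ * A⁻¹ * D) - (Fg - Dgᵀ * Ag⁻¹ * Dg)).PosSemidef := by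
    refine .of_dotProduct_mulVec_nonneg (hSherm.sub hSgherm) fun y => ?_
    set x : Fin n → ℝ := -((A⁻¹ * D) *ᵥ y) with hx
    have e1 : (star (x ⊕ᵥ y)) ᵥ* (fromBlocks A D Dᵀ F) ⬝ᵥ (x ⊕ᵥ y) =
        star y ⬝ᵥ (F - Dᵀ * A⁻¹ * D) *ᵥ y := by
      rw [hDT, schur_complement_eq₁₁ D F x y hA.1, hx, neg_add_cancel, dotProduct_mulVec, ← hDT]
      simp
    have e2 : (star (x ⊕ᵥ y)) ᵥ* (fromBlocks Ag Dg Dgᵀ Fg) ⬝ᵥ (x ⊕ᵥ y) =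
        (star (x + (Ag⁻¹ * Dg) *ᵥ y)) ᵥ* Ag ⬝ᵥ (x + (Ag⁻¹ * Dg) *ᵥ y) +
          star y ⬝ᵥ (Fg - Dgᵀ * Ag⁻¹ * Dg) *ᵥ y := by
      rw [hDgT, schur_complement_eq₁₁ Dg Fg x y hAg.1, dotProduct_mulVec, ← hDgT]
    have hd := hdiff.dotProduct_mulVec_nonneg (x ⊕ᵥ y)
    rw [dotProduct_mulVec, vecMul_sub, sub_dotProduct] at hd
    have hAgq : 0 ≤ (star (x + (Ag⁻¹ * Dg) *ᵥ y)) ᵥ* Ag ⬝ᵥ (x + (Ag⁻¹ * Dg) *ᵥ y) := by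
      rw [← dotProduct_mulVec]; exact hAg.posSemidef.dotProduct_mulVec_nonneg _
    have : star y ⬝ᵥ (Fg - Dgᵀ * Ag⁻¹ * Dg) *ᵥ y ≤ star y ⬝ᵥ (F - Dᵀ * A⁻¹ * D) *ᵥ y := by
      rw [← e1]
      calc star y ⬝ᵥ (Fg - Dgᵀ * Ag⁻¹ * Dg) *ᵥ y
          ≤ (star (x ⊕ᵥ y)) ᵥ* (fromBlocks Ag Dg Dgᵀ Fg) ⬝ᵥ (x ⊕ᵥ y) := by
            rw [e2]; linarith
        _ ≤ (star (x ⊕ᵥ y)) ᵥ* (fromBlocks A D Dᵀ F) ⬝ᵥ (x ⊕ᵥ y) := by linarith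
    rw [sub_mulVec, dotProduct_sub]
    linarith
  refine ⟨key, ?_⟩
  have := psd_trace_nonneg_s8 key
  rw [trace_sub] at this
  linarith
end

section
/- Let C and C_g be real symmetric positive semidefinite M×M matrices with C − C_g positive semidefinite, and let σ² > 0. Then the Kalman-updated covariances preserve the ordering: (C − C (C + σ²I_M)⁻¹ C) − (C_g − C_g (C_g + σ²I_M)⁻¹ C_g) is positive semidefinite; in particular tr(C − C (C + σ²I_M)⁻¹ C) ≥ tr(C_g − C_g (C_g + σ²I_M)⁻¹ C_g). -/
open Matrix

section Aux
variable {n : Type*} [Fintype n] [DecidableEq n]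

set_option linter.unusedSectionVars false in
lemma psd_smul_aux {A : Matrix n n ℝ} (hA : A.PosSemidef) {c : ℝ} (hc : 0 ≤ c) :
    (c • A).PosSemidef := by
  refine Matrix.PosSemidef.of_dotProduct_mulVec_nonneg ?_ fun x => ?_
  · rw [Matrix.IsHermitian, conjTranspose_smul, hA.1.eq, star_trivial]
  · rw [smul_mulVec, dotProduct_smul]
    exact smul_nonneg hc (hA.dotProduct_mulVec_nonneg x)

lemma psd_trace_nonneg_aux {A : Matrix n n ℝ} (hA : A.PosSemidef) : 0 ≤ A.trace := by
  rw [Matrix.trace]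
  refine Finset.sum_nonneg fun i _ => ?_
  have := hA.dotProduct_mulVec_nonneg (Pi.single i 1)
  simpa [Matrix.diag, dotProduct, mulVec, Pi.single_apply] using this

open scoped MatrixOrder in
lemma inv_anti_aux {A B : Matrix n n ℝ} (hA : A.PosDef) (hB : B.PosDef)
    (h : (A - B).PosSemidef) : (B⁻¹ - A⁻¹).PosSemidef := by
  set S := CFC.sqrt B with hSdef
  have hS : S * S = B := CFC.sqrt_mul_sqrt_self B hB.posSemidef.nonneg
  have hSh : S.IsHermitian := (CFC.sqrt_nonneg B).posSemidef.1
  have hdetS : IsUnit S.det := by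
    have h2 : S.det * S.det = B.det := by rw [← det_mul, hS]
    refine isUnit_iff_ne_zero.mpr fun h0 => ?_
    rw [h0, mul_zero] at h2
    exact hB.det_pos.ne' h2.symm
  have hSinv : S * S⁻¹ = 1 := mul_nonsing_inv _ hdetS
  have hSinv' : S⁻¹ * S = 1 := nonsing_inv_mul _ hdetS
  have hSih : S⁻¹.IsHermitian := hSh.inv
  set N := S⁻¹ * A * S⁻¹ with hNdef
  have hN : N.PosSemidef := by
    have := hA.posSemidef.mul_mul_conjTranspose_same S⁻¹
    rwa [hSih.eq] at this
  have hBN : S⁻¹ * B * S⁻¹ = 1 := by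
    rw [← hS, ← Matrix.mul_assoc, Matrix.mul_assoc _ S S⁻¹, hSinv, Matrix.mul_one, hSinv']
  have hNone : (N - 1).PosSemidef := by
    have h3 := h.mul_mul_conjTranspose_same S⁻¹
    rw [hSih.eq, Matrix.mul_sub, Matrix.sub_mul, hBN] at h3
    exact h3
  have hdetN : IsUnit N.det := by
    have hds : S⁻¹.det * S.det = 1 := by rw [← det_mul, hSinv', det_one]
    have hdsne : S⁻¹.det ≠ 0 := left_ne_zero_of_mul_eq_one hds
    rw [hNdef, det_mul, det_mul]
    exact isUnit_iff_ne_zero.mpr (by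
      exact mul_ne_zero (mul_ne_zero hdsne hA.det_pos.ne') hdsne)
  set R := CFC.sqrt N with hRdef
  have hRR : R * R = N := CFC.sqrt_mul_sqrt_self N hN.nonneg
  have hRh : R.IsHermitian := (CFC.sqrt_nonneg N).posSemidef.1
  have hdetR : IsUnit R.det := by
    have h2 : R.det * R.det = N.det := by rw [← det_mul, hRR]
    refine isUnit_iff_ne_zero.mpr fun h0 => ?_
    rw [h0, mul_zero] at h2
    exact hdetN.ne_zero h2.symm
  have hRinv : R * R⁻¹ = 1 := mul_nonsing_inv _ hdetR
  have hRinv' : R⁻¹ * R = 1 := nonsing_inv_mul _ hdetR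
  have hRih : R⁻¹.IsHermitian := hRh.inv
  have hNinv : R⁻¹ * R⁻¹ = N⁻¹ := by rw [← hRR, Matrix.mul_inv_rev]
  have h1 : ((1 : Matrix n n ℝ) - N⁻¹).PosSemidef := by
    have h4 := hNone.mul_mul_conjTranspose_same R⁻¹
    rw [hRih.eq] at h4
    have e : R⁻¹ * (N - 1) * R⁻¹ = 1 - N⁻¹ := by
      have e1 : R⁻¹ * N * R⁻¹ = 1 := by
        rw [← hRR, ← Matrix.mul_assoc, hRinv', Matrix.one_mul, hRinv]
      rw [Matrix.mul_sub, Matrix.sub_mul, e1, Matrix.mul_one, hNinv]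
    rwa [e] at h4
  have e2 : S⁻¹ * ((1 : Matrix n n ℝ) - N⁻¹) * S⁻¹ = B⁻¹ - A⁻¹ := by
    have eB : S⁻¹ * (1 : Matrix n n ℝ) * S⁻¹ = B⁻¹ := by
      rw [Matrix.mul_one, ← Matrix.mul_inv_rev, hS]
    have eN : N⁻¹ = S * A⁻¹ * S := by
      rw [hNdef, Matrix.mul_inv_rev, Matrix.mul_inv_rev, nonsing_inv_nonsing_inv _ hdetS,
        Matrix.mul_assoc]
    have eA : S⁻¹ * N⁻¹ * S⁻¹ = A⁻¹ := by
      rw [eN]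
      simp only [← Matrix.mul_assoc]
      rw [hSinv', Matrix.one_mul, Matrix.mul_assoc, hSinv, Matrix.mul_one]
    rw [Matrix.mul_sub, Matrix.sub_mul, eB, eA]
  have h5 := h1.mul_mul_conjTranspose_same S⁻¹
  rwa [hSih.eq, e2] at h5

lemma kalman_identity {A C : Matrix n n ℝ} {σ2 : ℝ}
    (hAC : A = C + σ2 • 1) (hdet : IsUnit A.det) :
    C - C * A⁻¹ * C = σ2 • 1 - (σ2 * σ2) • A⁻¹ := by
  have hC : C = A - σ2 • (1 : Matrix n n ℝ) := by rw [hAC]; abel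
  have hAi : A * A⁻¹ = 1 := mul_nonsing_inv _ hdet
  have hAi' : A⁻¹ * A = 1 := nonsing_inv_mul _ hdet
  rw [hC]
  simp only [Matrix.sub_mul, Matrix.mul_sub, Matrix.smul_mul, Matrix.mul_smul,
    Matrix.one_mul, Matrix.mul_one, hAi, hAi', smul_smul, smul_sub]
  abel
end Aux

/-- **Loewner monotonicity of the Kalman update (update-step ingredient of Theorem 2).**
If `C` and `C_g` are real symmetric positive semidefinite with `C - C_g` positive
semidefinite and `σ² > 0`, then
`(C - C(C + σ²I)⁻¹C) - (C_g - C_g(C_g + σ²I)⁻¹C_g)` is positive semidefinite; in particular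
the corresponding trace inequality holds. -/
theorem kalman_update_monotone
    (M : ℕ) (C Cg : Matrix (Fin M) (Fin M) ℝ)
    (hC : C.PosSemidef) (hCg : Cg.PosSemidef) (hle : (C - Cg).PosSemidef)
    (σ2 : ℝ) (hσ2 : 0 < σ2) :
    ((C - C * (C + σ2 • 1)⁻¹ * C) - (Cg - Cg * (Cg + σ2 • 1)⁻¹ * Cg)).PosSemidef ∧
      (Cg - Cg * (Cg + σ2 • 1)⁻¹ * Cg).trace ≤ (C - C * (C + σ2 • 1)⁻¹ * C).trace := by
  have hone : ((σ2 • 1 : Matrix (Fin M) (Fin M) ℝ)).PosDef := by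
    have : (σ2 • (1 : Matrix (Fin M) (Fin M) ℝ)) = diagonal (fun _ => σ2) := by
      rw [smul_one_eq_diagonal]
    rw [this]
    exact PosDef.diagonal (fun _ => hσ2)
  have hA : (C + σ2 • 1 : Matrix (Fin M) (Fin M) ℝ).PosDef := Matrix.PosDef.posSemidef_add hC hone
  have hB : (Cg + σ2 • 1 : Matrix (Fin M) (Fin M) ℝ).PosDef := Matrix.PosDef.posSemidef_add hCg hone
  have hsub : ((C + σ2 • 1) - (Cg + σ2 • 1) : Matrix (Fin M) (Fin M) ℝ).PosSemidef := by
    have : ((C + σ2 • 1) - (Cg + σ2 • 1) : Matrix (Fin M) (Fin M) ℝ) = C - Cg := by abel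
    rw [this]; exact hle
  have hinv := inv_anti_aux hA hB hsub
  have idC := kalman_identity (A := C + σ2 • 1) (C := C) rfl hA.det_pos.ne'.isUnit
  have idCg := kalman_identity (A := Cg + σ2 • 1) (C := Cg) rfl hB.det_pos.ne'.isUnit
  have ediff : (C - C * (C + σ2 • 1)⁻¹ * C) - (Cg - Cg * (Cg + σ2 • 1)⁻¹ * Cg)
      = (σ2 * σ2) • ((Cg + σ2 • 1)⁻¹ - (C + σ2 • 1)⁻¹) := by
    rw [idC, idCg, smul_sub]
    abel
  have hpsd : ((C - C * (C + σ2 • 1)⁻¹ * C) - (Cg - Cg * (Cg + σ2 • 1)⁻¹ * Cg)).PosSemidef := by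
    rw [ediff]
    exact psd_smul_aux hinv (by positivity)
  refine ⟨hpsd, ?_⟩
  have ht := psd_trace_nonneg_aux hpsd
  rwa [Matrix.trace_sub, sub_nonneg] at ht
end
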